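/- The poset F_8, on the set {a_i : i ∈ ℤ} ∪ {b_i : i ∈ ℤ} where the a_i are pairwise incomparable, the b_i are pairwise incomparable, and a_i < b_j iff (i > 0 or j ≠ i), is not reversible: there exists an order-preserving bijection from F_8 to itself whose inverse is not order-preserving. -/

import Mathlib

/-- `F₈`: on `{aᵢ : i ∈ ℤ} ∪ {bᵢ : i ∈ ℤ}` (encoded `Sum.inl i = aᵢ`,
`Sum.inr j = b_j`), the `aᵢ` pairwise incomparable, the `bᵢ` pairwise
incomparable, and `aᵢ < b_j` iff `i > 0` or `j ≠ i`. -/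
def F8 : Type := ℤ ⊕ ℤ

/-- The order relation of `F₈`. -/
def F8.le : F8 → F8 → Prop
  | Sum.inl i, Sum.inl i' => i = i'
  | Sum.inl i, Sum.inr j => 0 < i ∨ j ≠ i
  | Sum.inr _, Sum.inl _ => False
  | Sum.inr j, Sum.inr j' => j = j'

theorem F8.le_refl (x : F8) : F8.le x x := by cases x <;> simp [F8.le]
theorem F8.le_trans (x y z : F8) : F8.le x y → F8.le y z → F8.le x z := by
  cases x <;> cases y <;> cases z <;> simp [F8.le] <;> omega
theorem F8.le_antisymm (x y : F8) : F8.le x y → F8.le y x → x = y := by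
  cases x <;> cases y <;> simp [F8.le] <;> intro h h' <;> exact congrArg _ (by omega)

instance : PartialOrder F8 where
  le := F8.le
  le_refl := F8.le_refl
  le_trans := F8.le_trans
  le_antisymm := F8.le_antisymm

/-- The poset `F8` is not reversible. -/
theorem F8_not_reversible : ∃ f : F8 ≃ F8, Monotone f ∧ ¬ Monotone f.symm := by
  refine ⟨⟨fun x => match x with
      | Sum.inl i => Sum.inl (i + 1)
      | Sum.inr j => Sum.inr (j + 1),
    fun x => match x with
      | Sum.inl i => Sum.inl (i - 1)
      | Sum.inr j => Sum.inr (j - 1),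
    fun x => by cases x <;> simp <;> rfl,
    fun x => by cases x <;> simp <;> rfl⟩, ?_, ?_⟩
  · intro x y h
    cases x <;> cases y <;>
      simp only [Equiv.coe_fn_mk] <;>
      (change F8.le _ _ at h ⊢; simp only [F8.le] at h ⊢) <;>
      omega
  · intro h
    have h1 : @LE.le F8 _ (Sum.inl 1) (Sum.inr 1) := Or.inl one_pos
    have := h h1
    simp only [Equiv.coe_fn_symm_mk] at this
    have : F8.le (Sum.inl (1 - 1)) (Sum.inr (1 - 1)) := this
    simp [F8.le] at this
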